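/- Suppose f ∈ L¹(X,μ) and there is C > 0 with |⟨f, ψ^λ_{j,k}⟩| ≤ C·μ(Q_{j,k})^{α+1/2} for all j,k,λ. Then for every Q ∈ D and every Q̃ in the offspring of Q, |f_{Q̃} − f_Q| ≤ C·√((μ(Q)−μ(Q̃))/(μ(Q)μ(Q̃)))·√(dim V_Q − 1)·μ(Q)^{α+1/2}. -/

import Mathlib

open MeasureTheory Set

/-- A dyadic family with inheritance coefficient `B` on a probability space `(X, μ)`:
nested finite partitions `cubes j` of `X` into measurable sets of positive measure,
`cubes 0 = {univ}`, each cube at level `j+1` strictly contained in a unique cube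
(its first ancestor) at level `j`, and `μ(ancestor) ≤ B · μ(child)`. -/
structure DyadicFamily {X : Type*} [MeasurableSpace X] (μ : MeasureTheory.Measure X)
    (B : ℝ) where
  cubes : ℕ → Set (Set X)
  finiteLevel : ∀ j, (cubes j).Finite
  meas : ∀ j, ∀ Q ∈ cubes j, MeasurableSet Q
  zeroth : cubes 0 = {Set.univ}
  cover : ∀ j, ⋃₀ cubes j = Set.univ
  pdisjoint : ∀ j, (cubes j).PairwiseDisjoint id
  posMeasure : ∀ j, ∀ Q ∈ cubes j, 0 < μ Q
  ancestor : ∀ j, ∀ Q ∈ cubes (j + 1), ∃! P, P ∈ cubes j ∧ Q ⊂ P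
  inherit : ∀ j, ∀ Q ∈ cubes (j + 1), ∀ P ∈ cubes j, Q ⊂ P →
    (μ P).toReal ≤ B * (μ Q).toReal
  prob : μ Set.univ = 1

namespace DyadicFamily

variable {X : Type*} [MeasurableSpace X] {μ : MeasureTheory.Measure X} {B : ℝ}

/-- Membership in the dyadic family: `Q` is a cube of some level. -/
def Mem (D : DyadicFamily μ B) (Q : Set X) : Prop := ∃ j, Q ∈ D.cubes j

/-- The offspring of a cube `Q` of level `j`: the cubes of level `j+1`
strictly contained in `Q` (equivalently, whose first ancestor is `Q`). -/
def offspring (D : DyadicFamily μ B) (j : ℕ) (Q : Set X) : Set (Set X) :=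
  {Q' ∈ D.cubes (j + 1) | Q' ⊂ Q}

/-- The pseudo-ultrametric `δ_D(x,y) = inf {μ(Q) : x, y ∈ Q ∈ D}`. -/
noncomputable def delta (D : DyadicFamily μ B) (x y : X) : ℝ :=
  sInf {r : ℝ | ∃ Q, D.Mem Q ∧ x ∈ Q ∧ y ∈ Q ∧ r = (μ Q).toReal}

/-- The distance between two dyadic cubes via the smallest common dyadic ancestor. -/
noncomputable def cubeDist (D : DyadicFamily μ B) (Q₁ Q₂ : Set X) : ℝ :=
  sInf {r : ℝ | ∃ P, D.Mem P ∧ Q₁ ∪ Q₂ ⊆ P ∧ r = (μ P).toReal}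

/-- Mean value of `f` over `Q`. -/
noncomputable def avg (μ : MeasureTheory.Measure X) (f : X → ℝ) (Q : Set X) : ℝ :=
  ((μ Q).toReal)⁻¹ * ∫ x in Q, f x ∂μ

/-- `f` belongs to `V_{j,Q}`: it vanishes outside `Q` and is constant on each
offspring cube of `Q`. -/
def MemV (D : DyadicFamily μ B) (j : ℕ) (Q : Set X) (f : X → ℝ) : Prop :=
  (∀ Q' ∈ D.offspring j Q, ∃ c : ℝ, ∀ x ∈ Q', f x = c) ∧ ∀ x ∉ Q, f x = 0

end DyadicFamily

/-- If the Haar coefficients of `f ∈ L¹` relative to an orthonormal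
basis `{μ(Q)^{-1/2}χ_Q} ∪ {ψ^λ_Q}` of `V_Q` satisfy `|⟨f,ψ^λ⟩| ≤ C μ(Q)^{α+1/2}`, then
for every offspring cube `Q̃` of `Q`,
`|f_{Q̃} − f_Q| ≤ C √((μ(Q)−μ(Q̃))/(μ(Q)μ(Q̃))) √(dim V_Q − 1) μ(Q)^{α+1/2}`. -/
theorem avg_offspring_sub_avg_le {X : Type*} [MeasurableSpace X]
    {μ : MeasureTheory.Measure X} {B : ℝ} (hB : 2 ≤ B) (D : DyadicFamily μ B)
    (α : ℝ) (hα : 0 < α) (C : ℝ) (hC : 0 < C)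
    (f : X → ℝ) (hf : MeasureTheory.Integrable f μ)
    (j : ℕ) (Q : Set X) (hQ : Q ∈ D.cubes j)
    (n : ℕ) (hn : n + 1 = (D.offspring j Q).ncard)
    (ψ : Fin n → X → ℝ)
    (hV : ∀ i, D.MemV j Q (ψ i))
    (hzero : ∀ i, ∫ x, ψ i x ∂μ = 0)
    (hortho : ∀ i i', ∫ x, ψ i x * ψ i' x ∂μ = if i = i' then 1 else 0)
    (hspan : ∀ g : X → ℝ, D.MemV j Q g → (∫ x, g x ∂μ) = 0 →
      ∃ c : Fin n → ℝ, ∀ x, g x = ∑ i, c i * ψ i x)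
    (hcoeff : ∀ i, |∫ x, f x * ψ i x ∂μ| ≤ C * (μ Q).toReal ^ (α + 1/2))
    (Qt : Set X) (hQt : Qt ∈ D.offspring j Q) :
    |DyadicFamily.avg μ f Qt - DyadicFamily.avg μ f Q| ≤
      C * Real.sqrt (((μ Q).toReal - (μ Qt).toReal) / ((μ Q).toReal * (μ Qt).toReal)) *
        Real.sqrt n * (μ Q).toReal ^ (α + 1/2) := by 
  classical
  have hfin : IsFiniteMeasure μ := ⟨by rw [D.prob]; exact ENNReal.one_lt_top⟩
  obtain ⟨hQtc, hQts⟩ := hQt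
  have hQmeas : MeasurableSet Q := D.meas j Q hQ
  have hQtmeas : MeasurableSet Qt := D.meas (j+1) Qt hQtc
  set mQ : ℝ := (μ Q).toReal with hmQ
  set mQt : ℝ := (μ Qt).toReal with hmQt
  have hmQpos : 0 < mQ := ENNReal.toReal_pos (D.posMeasure j Q hQ).ne' (measure_ne_top μ Q)
  have hmQtpos : 0 < mQt :=
    ENNReal.toReal_pos (D.posMeasure (j+1) Qt hQtc).ne' (measure_ne_top μ Qt)
  set S : Set (Set X) := D.offspring j Q with hSdef
  have hSfin : S.Finite := (D.finiteLevel (j+1)).subset (fun Q' h => h.1)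
  -- every point of Q lies in an offspring cube
  have hcov : ∀ x ∈ Q, ∃ Q' ∈ S, x ∈ Q' := by
    intro x hx
    have hx' : x ∈ ⋃₀ D.cubes (j+1) := by rw [D.cover]; trivial
    obtain ⟨Q', hQ'c, hxQ'⟩ := hx'
    obtain ⟨P, ⟨hPc, hPs⟩, -⟩ := D.ancestor j Q' hQ'c
    have hPQ : P = Q := by
      by_contra hne
      exact Set.disjoint_left.mp (D.pdisjoint j hPc hQ hne) (hPs.subset hxQ') hx
    exact ⟨Q', ⟨hQ'c, hPQ ▸ hPs⟩, hxQ'⟩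
  -- representation of a V_Q member as a sum of indicators
  have hrep : ∀ ψ0 : X → ℝ, D.MemV j Q ψ0 →
      ∃ c : Set X → ℝ, ∀ x, ψ0 x =
        ∑ Q' ∈ hSfin.toFinset, Set.indicator Q' (fun _ => c Q') x := by
    intro ψ0 hψ0
    refine ⟨fun Q' => if h : Q' ∈ S then Classical.choose (hψ0.1 Q' h) else 0, fun x => ?_⟩
    by_cases hx : x ∈ Q
    · obtain ⟨Q0, hQ0S, hxQ0⟩ := hcov x hx
      rw [Finset.sum_eq_single Q0]
      · rw [Set.indicator_of_mem hxQ0]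
        simp only [dif_pos hQ0S]
        exact Classical.choose_spec (hψ0.1 Q0 hQ0S) x hxQ0
      · intro Q' hQ' hne
        refine Set.indicator_of_notMem (fun hxQ' => ?_) _
        exact Set.disjoint_left.mp
          (D.pdisjoint (j+1) (hSfin.mem_toFinset.mp hQ').1 hQ0S.1 hne) hxQ' hxQ0
      · intro h; exact absurd (hSfin.mem_toFinset.mpr hQ0S) h
    · rw [hψ0.2 x hx]
      refine (Finset.sum_eq_zero fun Q' hQ' => ?_).symm
      exact Set.indicator_of_notMem
        (fun hxQ' => hx ((hSfin.mem_toFinset.mp hQ').2.subset hxQ')) _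
  -- integrability of products with V_Q members
  have hint : ∀ h : X → ℝ, Integrable h μ → ∀ ψ0 : X → ℝ, D.MemV j Q ψ0 →
      Integrable (fun x => h x * ψ0 x) μ := by
    intro h hh ψ0 hψ0
    obtain ⟨c, hc⟩ := hrep ψ0 hψ0
    have heq : (fun x => h x * ψ0 x) =
        fun x => ∑ Q' ∈ hSfin.toFinset, Set.indicator Q' (fun y => c Q' * h y) x := by
      funext x
      rw [hc x, Finset.mul_sum]
      refine Finset.sum_congr rfl fun Q' _ => ?_
      by_cases hx : x ∈ Q'
      · simp [Set.indicator_of_mem hx, mul_comm]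
      · simp [Set.indicator_of_notMem hx]
    rw [heq]
    exact integrable_finset_sum _ fun Q' hQ' =>
      ((hh.const_mul (c Q')).indicator (D.meas (j+1) Q' (hSfin.mem_toFinset.mp hQ').1))
  have hψint : ∀ i, Integrable (ψ i) μ := by
    intro i
    have := hint (fun _ => 1) (integrable_const 1) (ψ i) (hV i)
    simpa using this
  -- the auxiliary function g
  set g : X → ℝ := fun x =>
    Set.indicator Qt (fun _ => mQt⁻¹) x - Set.indicator Q (fun _ => mQ⁻¹) x with hgdef
  have hgV : D.MemV j Q g := by
    constructor
    · rintro Q' ⟨hQ'c, hQ's⟩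
      by_cases h : Q' = Qt
      · refine ⟨mQt⁻¹ - mQ⁻¹, fun x hx => ?_⟩
        subst h
        simp [hgdef, Set.indicator_of_mem hx, Set.indicator_of_mem (hQ's.subset hx)]
      · refine ⟨-mQ⁻¹, fun x hx => ?_⟩
        have hxQt : x ∉ Qt :=
          fun hxQt => Set.disjoint_left.mp (D.pdisjoint (j+1) hQ'c hQtc h) hx hxQt
        simp [hgdef, Set.indicator_of_notMem hxQt, Set.indicator_of_mem (hQ's.subset hx)]
    · intro x hx
      have hxQt : x ∉ Qt := fun hxQt => hx (hQts.subset hxQt)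
      simp [hgdef, Set.indicator_of_notMem hx, Set.indicator_of_notMem hxQt]
  have hgint : Integrable g μ :=
    ((integrable_const _).indicator hQtmeas).sub ((integrable_const _).indicator hQmeas)
  have hgzero : ∫ x, g x ∂μ = 0 := by
    rw [hgdef]
    rw [integral_sub ((integrable_const _).indicator hQtmeas)
      ((integrable_const _).indicator hQmeas),
      integral_indicator_const _ hQtmeas, integral_indicator_const _ hQmeas]
    simp only [smul_eq_mul, ← hmQ, ← hmQt]
    change mQt * mQt⁻¹ - mQ * mQ⁻¹ = 0
    rw [mul_inv_cancel₀ hmQtpos.ne', mul_inv_cancel₀ hmQpos.ne', sub_self]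
  -- ⟨h, g⟩ for integrable h
  have hpair : ∀ h : X → ℝ, Integrable h μ →
      ∫ x, h x * g x ∂μ = mQt⁻¹ * ∫ x in Qt, h x ∂μ - mQ⁻¹ * ∫ x in Q, h x ∂μ := by
    intro h hh
    have heq : (fun x => h x * g x) =
        fun x => Set.indicator Qt (fun y => mQt⁻¹ * h y) x
          - Set.indicator Q (fun y => mQ⁻¹ * h y) x := by
      funext x
      simp only [hgdef, Set.indicator_apply]
      by_cases hx1 : x ∈ Qt <;> by_cases hx2 : x ∈ Q <;> simp [hx1, hx2] <;> ring
    rw [heq, integral_sub ((hh.const_mul _).indicator hQtmeas)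
      ((hh.const_mul _).indicator hQmeas),
      integral_indicator hQtmeas, integral_indicator hQmeas,
      integral_const_mul, integral_const_mul]
  have hfg : ∫ x, f x * g x ∂μ = DyadicFamily.avg μ f Qt - DyadicFamily.avg μ f Q := by
    rw [hpair f hf]; rfl
  have hgg : ∫ x, g x * g x ∂μ = mQt⁻¹ - mQ⁻¹ := by
    rw [hpair g hgint]
    have h1 : ∫ x in Qt, g x ∂μ = (mQt⁻¹ - mQ⁻¹) * mQt := by
      rw [setIntegral_congr_fun hQtmeas (g := fun _ => mQt⁻¹ - mQ⁻¹) (fun x hx => by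
        simp [hgdef, Set.indicator_of_mem hx, Set.indicator_of_mem (hQts.subset hx)]),
        setIntegral_const]
      simp [← hmQt, mul_comm]
      exact Or.inl rfl
    have h2 : ∫ x in Q, g x ∂μ = 0 := by
      rw [setIntegral_eq_integral_of_forall_compl_eq_zero (fun x hx => hgV.2 x hx), hgzero]
    rw [h1, h2, mul_zero, sub_zero, mul_comm, mul_assoc,
      mul_inv_cancel₀ hmQtpos.ne', mul_one]
  -- expand g in the basis
  obtain ⟨c, hc⟩ := hspan g hgV hgzero
  -- ⟨f, g⟩ = ∑ c i ⟨f, ψ i⟩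
  have hfg2 : ∫ x, f x * g x ∂μ = ∑ i, c i * ∫ x, f x * ψ i x ∂μ := by
    have heq : (fun x => f x * g x) = fun x => ∑ i, c i * (f x * ψ i x) := by
      funext x; rw [hc x, Finset.mul_sum]; exact Finset.sum_congr rfl fun i _ => by ring
    rw [heq, integral_finset_sum _ fun i _ => (hint f hf (ψ i) (hV i)).const_mul (c i)]
    exact Finset.sum_congr rfl fun i _ => integral_const_mul _ _
  -- ⟨g, g⟩ = ∑ c i ^ 2
  have hgg2 : ∫ x, g x * g x ∂μ = ∑ i, c i ^ 2 := by
    have heq : (fun x => g x * g x) =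
        fun x => ∑ i, ∑ i', (c i * c i') * (ψ i x * ψ i' x) := by
      funext x
      rw [hc x, Finset.sum_mul_sum]
      exact Finset.sum_congr rfl fun i _ => Finset.sum_congr rfl fun i' _ => by ring
    rw [heq, integral_finset_sum _ fun i _ => integrable_finset_sum _ fun i' _ =>
      ((hint (ψ i) (hψint i) (ψ i') (hV i')).const_mul _)]
    refine Finset.sum_congr rfl fun i _ => ?_
    rw [integral_finset_sum _ fun i' _ =>
      ((hint (ψ i) (hψint i) (ψ i') (hV i')).const_mul _)]
    have : ∀ i' : Fin n, (c i * c i') * ∫ x, ψ i x * ψ i' x ∂μ =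
        if i' = i then c i ^ 2 else 0 := by
      intro i'
      rw [hortho i i']
      by_cases h : i = i'
      · subst h; simp [sq]
      · rw [if_neg h, if_neg (Ne.symm h), mul_zero]
    have h2 : ∀ i' : Fin n, ∫ x, (c i * c i') * (ψ i x * ψ i' x) ∂μ =
        if i' = i then c i ^ 2 else 0 := fun i' => by
      rw [integral_const_mul]; exact this i'
    rw [Finset.sum_congr rfl fun i' _ => h2 i']
    simp
  have hsum_sq : ∑ i, c i ^ 2 = mQt⁻¹ - mQ⁻¹ := by rw [← hgg2, hgg]
  -- Cauchy–Schwarz bound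
  have hcs : ∑ i, |c i| ≤ Real.sqrt n * Real.sqrt (mQt⁻¹ - mQ⁻¹) := by
    have h1 : (∑ i, |c i|) ^ 2 ≤ (n : ℝ) * ∑ i, c i ^ 2 := by
      have := sq_sum_le_card_mul_sum_sq (s := (Finset.univ : Finset (Fin n)))
        (f := fun i => |c i|)
      simpa [sq_abs] using this
    have h2 : (0:ℝ) ≤ ∑ i, |c i| := Finset.sum_nonneg fun i _ => abs_nonneg _
    calc ∑ i, |c i| = Real.sqrt ((∑ i, |c i|) ^ 2) := (Real.sqrt_sq h2).symm
      _ ≤ Real.sqrt ((n : ℝ) * ∑ i, c i ^ 2) := Real.sqrt_le_sqrt h1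
      _ = Real.sqrt n * Real.sqrt (mQt⁻¹ - mQ⁻¹) := by
          rw [hsum_sq, Real.sqrt_mul (Nat.cast_nonneg n)]
  have hdiff : (mQ - mQt) / (mQ * mQt) = mQt⁻¹ - mQ⁻¹ := by
    rw [inv_eq_one_div, inv_eq_one_div, div_sub_div _ _ hmQtpos.ne' hmQpos.ne',
      one_mul, mul_one, mul_comm]
  -- main estimate
  have hmain : |DyadicFamily.avg μ f Qt - DyadicFamily.avg μ f Q| ≤
      (∑ i, |c i|) * (C * mQ ^ (α + 1/2)) := by
    rw [← hfg, hfg2]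
    calc |∑ i, c i * ∫ x, f x * ψ i x ∂μ|
        ≤ ∑ i, |c i * ∫ x, f x * ψ i x ∂μ| := Finset.abs_sum_le_sum_abs _ _
      _ ≤ ∑ i, |c i| * (C * mQ ^ (α + 1/2)) := by
          refine Finset.sum_le_sum fun i _ => ?_
          rw [abs_mul]
          exact mul_le_mul_of_nonneg_left (hcoeff i) (abs_nonneg _)
      _ = (∑ i, |c i|) * (C * mQ ^ (α + 1/2)) := by rw [← Finset.sum_mul]
  have hCpow : 0 ≤ C * mQ ^ (α + 1/2) :=
    mul_nonneg hC.le (Real.rpow_nonneg hmQpos.le _)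
  calc |DyadicFamily.avg μ f Qt - DyadicFamily.avg μ f Q|
      ≤ (∑ i, |c i|) * (C * mQ ^ (α + 1/2)) := hmain
    _ ≤ (Real.sqrt n * Real.sqrt (mQt⁻¹ - mQ⁻¹)) * (C * mQ ^ (α + 1/2)) :=
        mul_le_mul_of_nonneg_right hcs hCpow
    _ = C * Real.sqrt ((mQ - mQt) / (mQ * mQt)) * Real.sqrt n * mQ ^ (α + 1/2) := by
        rw [hdiff]; ring
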